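/- Every crossing-free straight-line drawing of the octahedron graph in ℝ³ that is covered by a family ℒ of lines satisfies |ℒ| ≥ 9. -/

import Mathlib

open Set

noncomputable section

/-- A crossing-free straight-line drawing of a simple graph `G` in `ℝ^d`:
an injective map of the vertices to points such that each edge `uv` is represented by the
closed segment between the images of `u` and `v`, the segments of two distinct edges
intersect exactly in the images of their common endpoints, and no vertex image lies on the
segment of a non-incident edge. -/
structure StraightLineDrawing (d : ℕ) {V : Type*} (G : SimpleGraph V) where
  pos : V → EuclideanSpace ℝ (Fin d)
  inj : Function.Injective pos
  crossFree : ∀ u v x y : V, G.Adj u v → G.Adj x y → s(u, v) ≠ s(x, y) →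
    segment ℝ (pos u) (pos v) ∩ segment ℝ (pos x) (pos y)
      = pos '' ({u, v} ∩ {x, y} : Set V)
  vertex_mem : ∀ u v w : V, G.Adj u v → pos w ∈ segment ℝ (pos u) (pos v) → w = u ∨ w = v

/-- The straight-line drawing `D` of `G` is covered by the family `ℒ` of lines
(1-dimensional affine subspaces): every edge segment lies in a line of `ℒ`. -/
def StraightLineDrawing.CoveredByLines {d : ℕ} {V : Type*} {G : SimpleGraph V}
    (D : StraightLineDrawing d G)
    (ℒ : Finset (AffineSubspace ℝ (EuclideanSpace ℝ (Fin d)))) : Prop :=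
  (∀ L ∈ ℒ, Module.finrank ℝ L.direction = 1) ∧
  ∀ u v : V, G.Adj u v →
    ∃ L ∈ ℒ, segment ℝ (D.pos u) (D.pos v) ⊆ (L : Set (EuclideanSpace ℝ (Fin d)))

/-- The octahedron graph: the complete tripartite graph `K_{2,2,2}` on the six vertices
`{0,…,5}` with parts `{0,3}`, `{1,4}`, `{2,5}`; two distinct vertices are adjacent iff
they are not opposite, i.e. iff they differ mod 3. -/
def octahedronGraph : SimpleGraph (Fin 6) where
  Adj i j := (i : ℕ) % 3 ≠ (j : ℕ) % 3
  symm := ⟨fun _ _ h => Ne.symm h⟩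
  loopless := ⟨fun _ h => h rfl⟩


def octaEdge : Finset (Sym2 (Fin 6)) :=
  Finset.univ.filter fun e =>
    Sym2.lift ⟨fun (a b : Fin 6) => decide ((a:ℕ)%3 ≠ (b:ℕ)%3),
      fun _ _ => decide_eq_decide.mpr ne_comm⟩ e = true

lemma mem_octaEdge {u v : Fin 6} : s(u,v) ∈ octaEdge ↔ (u:ℕ)%3 ≠ (v:ℕ)%3 := by
  simp [octaEdge, Sym2.lift_mk]

lemma octaEdge_card : octaEdge.card = 12 := by decide

lemma line_eq_of_two_mem {L1 L2 : AffineSubspace ℝ (EuclideanSpace ℝ (Fin 3))}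
    (h1 : Module.finrank ℝ L1.direction = 1) (h2 : Module.finrank ℝ L2.direction = 1)
    {p q : EuclideanSpace ℝ (Fin 3)} (hpq : p ≠ q)
    (hp1 : p ∈ L1) (hq1 : q ∈ L1) (hp2 : p ∈ L2) (hq2 : q ∈ L2) : L1 = L2 := by
  have key : ∀ L : AffineSubspace ℝ (EuclideanSpace ℝ (Fin 3)),
      Module.finrank ℝ L.direction = 1 → p ∈ L → q ∈ L →
      L.direction = vectorSpan ℝ ({p, q} : Set (EuclideanSpace ℝ (Fin 3))) := by
    intro L hL hp hq
    have hsub : ({p, q} : Set (EuclideanSpace ℝ (Fin 3))) ⊆ (L : Set _) := by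
      rintro x (rfl | rfl) <;> assumption
    have hle : vectorSpan ℝ ({p,q} : Set (EuclideanSpace ℝ (Fin 3))) ≤ L.direction :=
      vectorSpan_mono ℝ hsub
    have hfr : Module.finrank ℝ
        (vectorSpan ℝ ({p,q} : Set (EuclideanSpace ℝ (Fin 3)))) = 1 := by
      rw [vectorSpan_pair]
      exact finrank_span_singleton (vsub_ne_zero.mpr hpq)
    exact (Submodule.eq_of_le_of_finrank_le hle (by rw [hL, hfr])).symm
  have hdd := (key L1 h1 hp1 hq1).trans (key L2 h2 hp2 hq2).symm
  exact AffineSubspace.ext_of_direction_eq hdd ⟨p, hp1, hp2⟩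

lemma collinear_of_subset_line {L : AffineSubspace ℝ (EuclideanSpace ℝ (Fin 3))}
    (hL : Module.finrank ℝ L.direction = 1) {s : Set (EuclideanSpace ℝ (Fin 3))}
    (hs : s ⊆ (L : Set (EuclideanSpace ℝ (Fin 3)))) : Collinear ℝ s := by
  have h1 : Module.rank ℝ L.direction = 1 := by
    have := Module.finrank_eq_rank ℝ L.direction
    rw [hL] at this
    simpa using this.symm
  rw [collinear_iff_rank_le_one]
  calc Module.rank ℝ (vectorSpan ℝ s) ≤ Module.rank ℝ L.direction :=
        Submodule.rank_mono (vectorSpan_mono ℝ hs)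
    _ = 1 := h1

lemma mem_segment_param (p₀ v : EuclideanSpace ℝ (Fin 3)) {r s t : ℝ}
    (h1 : r ≤ s) (h2 : s ≤ t) :
    s • v +ᵥ p₀ ∈ segment ℝ (r • v +ᵥ p₀) (t • v +ᵥ p₀) := by
  have hf : ∀ u : ℝ,
      (AffineMap.lineMap p₀ (v +ᵥ p₀) : ℝ →ᵃ[ℝ] EuclideanSpace ℝ (Fin 3)) u = u • v +ᵥ p₀ := by
    intro u; rw [AffineMap.lineMap_apply, vadd_vsub]
  have hmem : s ∈ segment ℝ r t := by rw [segment_eq_Icc (h1.trans h2)]; exact ⟨h1, h2⟩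
  have himg := image_segment ℝ
    (AffineMap.lineMap p₀ (v +ᵥ p₀) : ℝ →ᵃ[ℝ] EuclideanSpace ℝ (Fin 3)) r t
  rw [← hf r, ← hf t, ← himg]
  exact ⟨s, hmem, hf s⟩

lemma octa_adj_iff {a b : Fin 6} : octahedronGraph.Adj a b ↔ (a:ℕ)%3 ≠ (b:ℕ)%3 := Iff.rfl

lemma middle_nonadj (D : StraightLineDrawing 3 octahedronGraph) {a m b : Fin 6}
    (hma : m ≠ a) (hmb : m ≠ b)
    (hmem : D.pos m ∈ segment ℝ (D.pos a) (D.pos b)) :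
    (a : ℕ) % 3 = (b : ℕ) % 3 := by
  by_contra h
  rcases D.vertex_mem a b m (octa_adj_iff.mpr h) hmem with rfl | rfl
  · exact hma rfl
  · exact hmb rfl

lemma collinear_triple (D : StraightLineDrawing 3 octahedronGraph) {x y z : Fin 6}
    (hxy : x ≠ y) (hxz : x ≠ z) (hyz : y ≠ z)
    (hc : Collinear ℝ ({D.pos x, D.pos y, D.pos z} : Set (EuclideanSpace ℝ (Fin 3)))) :
    ∃ a b : Fin 6, a ≠ b ∧ (a:ℕ)%3 = (b:ℕ)%3 ∧
      a ∈ ({x, y, z} : Set (Fin 6)) ∧ b ∈ ({x, y, z} : Set (Fin 6)) := by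
  rcases hc.wbtw_or_wbtw_or_wbtw with h | h | h
  · exact ⟨x, z, hxz, middle_nonadj D hxy.symm hyz h.mem_segment, by simp, by simp⟩
  · exact ⟨y, x, hxy.symm, middle_nonadj D hyz.symm hxz.symm h.mem_segment, by simp, by simp⟩
  · exact ⟨z, y, hyz.symm, middle_nonadj D hxz hxy h.mem_segment, by simp, by simp⟩

lemma no_four_collinear (D : StraightLineDrawing 3 octahedronGraph) {w x y z : Fin 6}
    (hwx : w ≠ x) (hwy : w ≠ y) (hwz : w ≠ z) (hxy : x ≠ y) (hxz : x ≠ z) (hyz : y ≠ z)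
    (hc : Collinear ℝ ({D.pos w, D.pos x, D.pos y, D.pos z} : Set (EuclideanSpace ℝ (Fin 3)))) :
    False := by
  classical
  have hw : D.pos w ∈ ({D.pos w, D.pos x, D.pos y, D.pos z} : Set _) := by simp
  rw [collinear_iff_of_mem hw] at hc
  obtain ⟨v, hv⟩ := hc
  obtain ⟨rw', hrw⟩ := hv (D.pos w) (by simp)
  obtain ⟨rx', hrx⟩ := hv (D.pos x) (by simp)
  obtain ⟨ry', hry⟩ := hv (D.pos y) (by simp)
  obtain ⟨rz', hrz⟩ := hv (D.pos z) (by simp)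
  have hvne : v ≠ 0 := by
    rintro rfl
    apply hwx (D.inj ?_)
    rw [hrx, hrw]; simp
  have hdist : ∀ (c c' : Fin 6) (r r' : ℝ), D.pos c = r • v +ᵥ D.pos w →
      D.pos c' = r' • v +ᵥ D.pos w → r = r' → c = c' := by
    intro c c' r r' h h' hrr; apply D.inj; rw [h, h', hrr]
  have h1 : rw' ≠ rx' := fun h => hwx (hdist _ _ _ _ hrw hrx h)
  have h2 : rw' ≠ ry' := fun h => hwy (hdist _ _ _ _ hrw hry h)
  have h3 : rw' ≠ rz' := fun h => hwz (hdist _ _ _ _ hrw hrz h)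
  have h4 : rx' ≠ ry' := fun h => hxy (hdist _ _ _ _ hrx hry h)
  have h5 : rx' ≠ rz' := fun h => hxz (hdist _ _ _ _ hrx hrz h)
  have h6 : ry' ≠ rz' := fun h => hyz (hdist _ _ _ _ hry hrz h)
  set F : Finset ℝ := {rw', rx', ry', rz'} with hFdef
  have hF : F.card = 4 := by
    rw [hFdef]
    rw [Finset.card_insert_of_notMem (by simp [h1, h2, h3]),
      Finset.card_insert_of_notMem (by simp [h4, h5]),
      Finset.card_insert_of_notMem (by simp [h6]), Finset.card_singleton]
  set iso := F.orderIsoOfFin hF with hiso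
  set u : Fin 4 → ℝ := fun i => (iso i : ℝ) with hu
  have hmono : ∀ i j : Fin 4, i < j → u i < u j := by
    intro i j hij
    exact Subtype.coe_lt_coe.mpr (iso.lt_iff_lt.mpr hij)
  have hex : ∀ i : Fin 4, ∃ c : Fin 6, D.pos c = u i • v +ᵥ D.pos w := by
    intro i
    have hm : u i ∈ F := (iso i).2
    rw [hFdef] at hm
    simp only [Finset.mem_insert, Finset.mem_singleton] at hm
    rcases hm with h|h|h|h
    · exact ⟨w, by rw [h]; exact hrw⟩
    · exact ⟨x, by rw [h]; exact hrx⟩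
    · exact ⟨y, by rw [h]; exact hry⟩
    · exact ⟨z, by rw [h]; exact hrz⟩
  choose g hgpos using hex
  have hginj : ∀ i j : Fin 4, g i = g j → i = j := by
    intro i j hij
    have h1' := hgpos i
    have h2' := hgpos j
    rw [hij] at h1'
    have h3' : u i • v = u j • v := vadd_right_cancel (D.pos w) (h1'.symm.trans h2')
    have h4' : u i = u j := smul_left_injective ℝ hvne h3'
    exact iso.injective (Subtype.ext h4')
  have m1 : D.pos (g 1) ∈ segment ℝ (D.pos (g 0)) (D.pos (g 2)) := by
    rw [hgpos 0, hgpos 1, hgpos 2]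
    exact mem_segment_param _ _ (hmono 0 1 (by decide)).le (hmono 1 2 (by decide)).le
  have m2 : D.pos (g 1) ∈ segment ℝ (D.pos (g 0)) (D.pos (g 3)) := by
    rw [hgpos 0, hgpos 1, hgpos 3]
    exact mem_segment_param _ _ (hmono 0 1 (by decide)).le (hmono 1 3 (by decide)).le
  have hne : ∀ i j : Fin 4, i ≠ j → g i ≠ g j := fun i j hij h => hij (hginj i j h)
  have n1 : ((g 0 : Fin 6) : ℕ) % 3 = ((g 2 : Fin 6) : ℕ) % 3 :=
    middle_nonadj D (hne 1 0 (by decide)) (hne 1 2 (by decide)) m1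
  have n2 : ((g 0 : Fin 6) : ℕ) % 3 = ((g 3 : Fin 6) : ℕ) % 3 :=
    middle_nonadj D (hne 1 0 (by decide)) (hne 1 3 (by decide)) m2
  have key : ∀ a c d : Fin 6, a ≠ c → a ≠ d → c ≠ d →
      (a:ℕ)%3 = (c:ℕ)%3 → (a:ℕ)%3 = (d:ℕ)%3 → False := by decide
  exact key (g 0) (g 2) (g 3) (hne 0 2 (by decide)) (hne 0 3 (by decide))
    (hne 2 3 (by decide)) n1 n2

lemma opp_pair : ∀ a b : Fin 6, a ≠ b → (a:ℕ)%3 = (b:ℕ)%3 →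
    ∃ k : Fin 6, (k:ℕ) < 3 ∧ ((k = a ∧ k + 3 = b) ∨ (k = b ∧ k + 3 = a)) := by decide

/-- Every crossing-free straight-line drawing of the octahedron graph in `ℝ³` covered by a
family `ℒ` of lines satisfies `|ℒ| ≥ 9`. -/
theorem octahedron_line_cover_lower_bound
    (D : StraightLineDrawing 3 octahedronGraph)
    (ℒ : Finset (AffineSubspace ℝ (EuclideanSpace ℝ (Fin 3))))
    (hcov : D.CoveredByLines ℒ) :
    9 ≤ ℒ.card := by
  classical
  obtain ⟨hrank, hcov2⟩ := hcov
  set seg : Sym2 (Fin 6) → Set (EuclideanSpace ℝ (Fin 3)) :=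
    Sym2.lift ⟨fun u v => segment ℝ (D.pos u) (D.pos v), fun u v => segment_symm ℝ (D.pos u) (D.pos v)⟩ with hseg
  have hsegmk : ∀ u v : Fin 6, seg s(u,v) = segment ℝ (D.pos u) (D.pos v) := by
    intro u v; simp [hseg]
  have hsel : ∀ e ∈ octaEdge, ∃ L ∈ ℒ, seg e ⊆ (L : Set (EuclideanSpace ℝ (Fin 3))) := by
    intro e he
    obtain ⟨u, v, rfl⟩ : ∃ u v : Fin 6, e = s(u,v) := by
      induction e using Sym2.ind with
      | _ u v => exact ⟨u, v, rfl⟩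
    rw [mem_octaEdge] at he
    obtain ⟨L, hL, hLs⟩ := hcov2 u v (octa_adj_iff.mpr he)
    exact ⟨L, hL, by rw [hsegmk]; exact hLs⟩
  choose! f hf1 hf2 using hsel
  set fiber : AffineSubspace ℝ (EuclideanSpace ℝ (Fin 3)) → Finset (Sym2 (Fin 6)) :=
    fun L => octaEdge.filter fun e => f e = L with hfiber
  have hend : ∀ (L : AffineSubspace ℝ (EuclideanSpace ℝ (Fin 3))) (u v : Fin 6),
      s(u,v) ∈ fiber L → (u:ℕ)%3 ≠ (v:ℕ)%3 ∧ D.pos u ∈ L ∧ D.pos v ∈ L := by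
    intro L u v hm
    rw [hfiber, Finset.mem_filter] at hm
    obtain ⟨hmE, hfe⟩ := hm
    have hsub := hf2 _ hmE
    rw [hfe, hsegmk] at hsub
    rw [mem_octaEdge] at hmE
    exact ⟨hmE, hsub (left_mem_segment ℝ _ _), hsub (right_mem_segment ℝ _ _)⟩
  -- two distinct edges on a line give three distinct vertices on it
  have hthree : ∀ (L : AffineSubspace ℝ (EuclideanSpace ℝ (Fin 3))),
      ∀ e1 ∈ fiber L, ∀ e2 ∈ fiber L, e1 ≠ e2 →
      ∃ x y z : Fin 6, x ≠ y ∧ x ≠ z ∧ y ≠ z ∧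
        D.pos x ∈ L ∧ D.pos y ∈ L ∧ D.pos z ∈ L := by
    intro L e1 he1 e2 he2 hne
    obtain ⟨a, b, rfl⟩ : ∃ u v : Fin 6, e1 = s(u,v) := by
      induction e1 using Sym2.ind with
      | _ u v => exact ⟨u, v, rfl⟩
    obtain ⟨c, d, rfl⟩ : ∃ u v : Fin 6, e2 = s(u,v) := by
      induction e2 using Sym2.ind with
      | _ u v => exact ⟨u, v, rfl⟩
    obtain ⟨hab, hpa, hpb⟩ := hend L a b he1
    obtain ⟨hcd, hpc, hpd⟩ := hend L c d he2
    have hab' : a ≠ b := fun h => hab (by rw [h])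
    have hcd' : c ≠ d := fun h => hcd (by rw [h])
    by_cases hca : c = a
    · subst hca
      by_cases hdb : d = b
      · subst hdb; exact absurd rfl hne
      · exact ⟨c, b, d, hab', hcd', fun h => hdb h.symm, hpa, hpb, hpd⟩
    · by_cases hcb : c = b
      · subst hcb
        by_cases hda : d = a
        · subst hda; exact absurd (Sym2.eq_swap) hne
        · exact ⟨a, c, d, hab', fun h => hda h.symm, hcd', hpa, hpb, hpd⟩
      · exact ⟨a, b, c, hab', fun h => hca h.symm, fun h => hcb h.symm, hpa, hpb, hpc⟩
  -- at most three vertices on any line of the family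
  have hS3 : ∀ L ∈ ℒ, (Finset.univ.filter fun c : Fin 6 => D.pos c ∈ L).card ≤ 3 := by
    intro L hL
    by_contra hgt
    push_neg at hgt
    obtain ⟨t, hts, htc⟩ := Finset.exists_subset_card_eq hgt
    obtain ⟨w, hw⟩ := Finset.card_pos.mp (by omega : 0 < t.card)
    have hec : (t.erase w).card = 3 := by
      rw [Finset.card_erase_of_mem hw, htc]
    obtain ⟨x, y, z, hxy, hxz, hyz, hexyz⟩ := Finset.card_eq_three.mp hec
    have hxm : x ∈ t.erase w := by rw [hexyz]; simp
    have hym : y ∈ t.erase w := by rw [hexyz]; simp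
    have hzm : z ∈ t.erase w := by rw [hexyz]; simp
    have hwx : w ≠ x := fun h => (Finset.mem_erase.mp hxm).1 h.symm
    have hwy : w ≠ y := fun h => (Finset.mem_erase.mp hym).1 h.symm
    have hwz : w ≠ z := fun h => (Finset.mem_erase.mp hzm).1 h.symm
    have hmemL : ∀ c ∈ t, D.pos c ∈ L := by
      intro c hc
      exact (Finset.mem_filter.mp (hts hc)).2
    have hcoll : Collinear ℝ ({D.pos w, D.pos x, D.pos y, D.pos z} :
        Set (EuclideanSpace ℝ (Fin 3))) := by
      apply collinear_of_subset_line (hrank L hL)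
      rintro p (rfl | rfl | rfl | rfl)
      · exact hmemL w hw
      · exact hmemL x (Finset.mem_of_mem_erase hxm)
      · exact hmemL y (Finset.mem_of_mem_erase hym)
      · exact hmemL z (Finset.mem_of_mem_erase hzm)
    exact no_four_collinear D hwx hwy hwz hxy hxz hyz hcoll
  -- each line carries at most two edges
  have hfib2 : ∀ L ∈ ℒ, (fiber L).card ≤ 2 := by
    intro L hL
    by_contra hgt
    push_neg at hgt
    obtain ⟨e1, he1, e2, he2, e3, he3, h12, h13, h23⟩ := Finset.two_lt_card.mp hgt
    obtain ⟨x, y, z, hxy, hxz, hyz, hpx, hpy, hpz⟩ := hthree L e1 he1 e2 he2 h12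
    set S := Finset.univ.filter fun c : Fin 6 => D.pos c ∈ L with hSdef
    have hsubS : ({x, y, z} : Finset (Fin 6)) ⊆ S := by
      intro c hc
      rw [Finset.mem_insert, Finset.mem_insert, Finset.mem_singleton] at hc
      rw [hSdef, Finset.mem_filter]
      rcases hc with rfl | rfl | rfl
      · exact ⟨Finset.mem_univ _, hpx⟩
      · exact ⟨Finset.mem_univ _, hpy⟩
      · exact ⟨Finset.mem_univ _, hpz⟩
    have hc3 : ({x, y, z} : Finset (Fin 6)).card = 3 := by
      rw [Finset.card_insert_of_notMem (by simp [hxy, hxz]),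
        Finset.card_insert_of_notMem (by simp [hyz]), Finset.card_singleton]
    have hSeq : ({x, y, z} : Finset (Fin 6)) = S :=
      Finset.eq_of_subset_of_card_le hsubS (by rw [hc3]; exact hS3 L hL)
    have hmemS : ∀ u v : Fin 6, s(u,v) ∈ fiber L →
        u ∈ ({x, y, z} : Finset (Fin 6)) ∧ v ∈ ({x, y, z} : Finset (Fin 6)) := by
      intro u v hm
      obtain ⟨_, hpu, hpv⟩ := hend L u v hm
      constructor
      · rw [hSeq, hSdef, Finset.mem_filter]; exact ⟨Finset.mem_univ _, hpu⟩
      · rw [hSeq, hSdef, Finset.mem_filter]; exact ⟨Finset.mem_univ _, hpv⟩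
    set P : Finset (Sym2 (Fin 6)) := {s(x,y), s(x,z), s(y,z)} with hPdef
    have hmemP : ∀ u v : Fin 6, u ≠ v → u ∈ ({x, y, z} : Finset (Fin 6)) →
        v ∈ ({x, y, z} : Finset (Fin 6)) → s(u,v) ∈ P := by
      intro u v huv hu hv
      rw [Finset.mem_insert, Finset.mem_insert, Finset.mem_singleton] at hu hv
      rw [hPdef]
      rcases hu with rfl | rfl | rfl
      · rcases hv with rfl | rfl | rfl
        · exact absurd rfl huv
        · exact Finset.mem_insert_self _ _
        · exact Finset.mem_insert_of_mem (Finset.mem_insert_self _ _)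
      · rcases hv with rfl | rfl | rfl
        · exact Finset.mem_insert.mpr (Or.inl Sym2.eq_swap)
        · exact absurd rfl huv
        · exact Finset.mem_insert_of_mem
            (Finset.mem_insert_of_mem (Finset.mem_singleton_self _))
      · rcases hv with rfl | rfl | rfl
        · exact Finset.mem_insert.mpr
            (Or.inr (Finset.mem_insert.mpr (Or.inl Sym2.eq_swap)))
        · exact Finset.mem_insert.mpr (Or.inr (Finset.mem_insert.mpr
            (Or.inr (Finset.mem_singleton.mpr Sym2.eq_swap))))
        · exact absurd rfl huv
    have hfibP : fiber L ⊆ P := by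
      intro e he
      obtain ⟨u, v, rfl⟩ : ∃ u v : Fin 6, e = s(u,v) := by
        induction e using Sym2.ind with
        | _ u v => exact ⟨u, v, rfl⟩
      obtain ⟨hu, hv⟩ := hmemS u v he
      have hne := (hend L u v he).1
      exact hmemP u v (fun h => hne (by rw [h])) hu hv
    have hPcard : P.card ≤ 3 := by
      rw [hPdef]
      calc ({s(x,y), s(x,z), s(y,z)} : Finset (Sym2 (Fin 6))).card
          ≤ ({s(x,z), s(y,z)} : Finset (Sym2 (Fin 6))).card + 1 := Finset.card_insert_le _ _
        _ ≤ (({s(y,z)} : Finset (Sym2 (Fin 6))).card + 1) + 1 := by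
            exact Nat.add_le_add_right (Finset.card_insert_le _ _) 1
        _ = 3 := by rw [Finset.card_singleton]
    have hsub3 : ({e1, e2, e3} : Finset (Sym2 (Fin 6))) ⊆ P := by
      intro e he
      rw [Finset.mem_insert, Finset.mem_insert, Finset.mem_singleton] at he
      rcases he with rfl | rfl | rfl
      · exact hfibP he1
      · exact hfibP he2
      · exact hfibP he3
    have hc3' : ({e1, e2, e3} : Finset (Sym2 (Fin 6))).card = 3 := by
      rw [Finset.card_insert_of_notMem (by simp [h12, h13]),
        Finset.card_insert_of_notMem (by simp [h23]), Finset.card_singleton]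
    have hPeq : ({e1, e2, e3} : Finset (Sym2 (Fin 6))) = P :=
      Finset.eq_of_subset_of_card_le hsub3 (by rw [hc3']; exact hPcard)
    -- now get a nonadjacent pair among x,y,z and derive a contradiction
    have hcoll : Collinear ℝ ({D.pos x, D.pos y, D.pos z} :
        Set (EuclideanSpace ℝ (Fin 3))) := by
      apply collinear_of_subset_line (hrank L hL)
      rintro p (rfl | rfl | rfl)
      · exact hpx
      · exact hpy
      · exact hpz
    obtain ⟨a, b, hab, habmod, ham, hbm⟩ := collinear_triple D hxy hxz hyz hcoll
    have hamF : a ∈ ({x, y, z} : Finset (Fin 6)) := by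
      rw [Finset.mem_insert, Finset.mem_insert, Finset.mem_singleton]
      simpa using ham
    have hbmF : b ∈ ({x, y, z} : Finset (Fin 6)) := by
      rw [Finset.mem_insert, Finset.mem_insert, Finset.mem_singleton]
      simpa using hbm
    have habP : s(a,b) ∈ P := hmemP a b hab hamF hbmF
    rw [← hPeq] at habP
    rw [Finset.mem_insert, Finset.mem_insert, Finset.mem_singleton] at habP
    have habE : s(a,b) ∈ fiber L := by
      rcases habP with rfl | rfl | rfl
      · exact he1
      · exact he2
      · exact he3
    exact (hend L a b habE).1 habmod
  -- each line with two edges contains an opposite pair, determined uniquely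
  have hpair : ∀ L ∈ ℒ, 2 ≤ (fiber L).card →
      ∃ k : Fin 6, (k:ℕ) < 3 ∧ D.pos k ∈ L ∧ D.pos (k+3) ∈ L := by
    intro L hL hc
    obtain ⟨e1, he1, e2, he2, hne⟩ := Finset.one_lt_card.mp hc
    obtain ⟨x, y, z, hxy, hxz, hyz, hpx, hpy, hpz⟩ := hthree L e1 he1 e2 he2 hne
    have hcoll : Collinear ℝ ({D.pos x, D.pos y, D.pos z} :
        Set (EuclideanSpace ℝ (Fin 3))) := by
      apply collinear_of_subset_line (hrank L hL)
      rintro p (rfl | rfl | rfl)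
      · exact hpx
      · exact hpy
      · exact hpz
    obtain ⟨a, b, hab, habmod, ham, hbm⟩ := collinear_triple D hxy hxz hyz hcoll
    have hpa : D.pos a ∈ L := by
      rcases ham with rfl | rfl | rfl
      · exact hpx
      · exact hpy
      · exact hpz
    have hpb : D.pos b ∈ L := by
      rcases hbm with rfl | rfl | rfl
      · exact hpx
      · exact hpy
      · exact hpz
    obtain ⟨k, hk3, hkc⟩ := opp_pair a b hab habmod
    rcases hkc with ⟨rfl, h3⟩ | ⟨rfl, h3⟩
    · exact ⟨k, hk3, hpa, by rw [h3]; exact hpb⟩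
    · exact ⟨k, hk3, hpb, by rw [h3]; exact hpa⟩
  -- counting
  have hsum : octaEdge.card = ∑ L ∈ ℒ, (fiber L).card :=
    Finset.card_eq_sum_card_fiberwise hf1
  set T := ℒ.filter (fun L => 2 ≤ (fiber L).card) with hTdef
  have hT3 : T.card ≤ 3 := by
    have hsel2 : ∀ L ∈ T, ∃ k : Fin 6, (k:ℕ) < 3 ∧ D.pos k ∈ L ∧ D.pos (k+3) ∈ L := by
      intro L hL
      rw [hTdef, Finset.mem_filter] at hL
      exact hpair L hL.1 hL.2
    choose! κ hκ1 hκ2 hκ3 using hsel2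
    have hcard : (Finset.univ.filter fun k : Fin 6 => (k:ℕ) < 3).card = 3 := by decide
    refine le_trans (Finset.card_le_card_of_injOn κ ?_ ?_) (le_of_eq hcard)
    · intro L hL
      rw [Finset.mem_coe, Finset.mem_filter]
      exact ⟨Finset.mem_univ _, hκ1 L hL⟩
    · intro L1 h1 L2 h2 heq
      have hkk : κ L1 ≠ κ L1 + 3 := by
        have : ∀ k : Fin 6, k ≠ k + 3 := by decide
        exact this _
      have hne : D.pos (κ L1) ≠ D.pos (κ L1 + 3) := fun h => hkk (D.inj h)
      have hm1 : L1 ∈ ℒ := (Finset.mem_filter.mp h1).1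
      have hm2 : L2 ∈ ℒ := (Finset.mem_filter.mp h2).1
      refine line_eq_of_two_mem (hrank L1 hm1) (hrank L2 hm2) hne
        (hκ2 L1 h1) (hκ3 L1 h1) ?_ ?_
      · rw [heq]; exact hκ2 L2 h2
      · rw [heq]; exact hκ3 L2 h2
  have hbound : ∑ L ∈ ℒ, (fiber L).card ≤
      ∑ L ∈ ℒ, (1 + if 2 ≤ (fiber L).card then 1 else 0) := by
    apply Finset.sum_le_sum
    intro L hL
    have := hfib2 L hL
    split_ifs with h
    · omega
    · omega
  have hsplit : ∑ L ∈ ℒ, (1 + if 2 ≤ (fiber L).card then 1 else 0)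
      = ℒ.card + T.card := by
    rw [Finset.sum_add_distrib, Finset.sum_const, smul_eq_mul, mul_one, hTdef,
      Finset.card_filter]
  have h12' : (12 : ℕ) ≤ ℒ.card + T.card := by
    rw [← hsplit]
    calc (12:ℕ) = octaEdge.card := octaEdge_card.symm
      _ = ∑ L ∈ ℒ, (fiber L).card := hsum
      _ ≤ _ := hbound
  omega
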